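/- Let β > 0 and let ψ be a continuous probability density on ℝ with ψ(−s) = ψ(s) > 0 for all s ∈ ℝ and ψ nonincreasing on [0,∞). Then the map N(f) = ∫_ℝ sup_{t∈[0,1]}(|f(t)| ψ(s − β t)) ds is a norm on the vector space of bounded functions f : [0,1] → ℝ with at most finitely many discontinuities: N(f) is finite, N(f) = 0 if and only if f = 0, N(λf) = |λ|·N(f) for all λ ∈ ℝ, and N(f + g) ≤ N(f) + N(g). -/

import Mathlib

open MeasureTheory

/-- The `D`-norm functional generated by `ψ` and `β`. -/
noncomputable def Dnorm (β : ℝ) (ψ : ℝ → ℝ) (f : Set.Icc (0:ℝ) 1 → ℝ) : ℝ :=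
  ∫ s, ⨆ t : Set.Icc (0:ℝ) 1, |f t| * ψ (s - β * (t : ℝ))

/-- Membership in `E[0,1]`: bounded with at most finitely many discontinuities. -/
def MemE (f : Set.Icc (0:ℝ) 1 → ℝ) : Prop :=
  (∃ B, ∀ t, |f t| ≤ B) ∧ {t | ¬ ContinuousAt f t}.Finite

section Aux

variable {β : ℝ} {ψ : ℝ → ℝ}

lemma psi_le_psi_zero (hψsymm : ∀ s, ψ (-s) = ψ s) (hψanti : AntitoneOn ψ (Set.Ici 0))
    (x : ℝ) : ψ x ≤ ψ 0 := by
  have h1 : ψ x = ψ |x| := by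
    rcases abs_cases x with ⟨h, _⟩ | ⟨h, _⟩
    · rw [h]
    · rw [h, hψsymm]
  rw [h1]
  exact hψanti Set.self_mem_Ici (abs_nonneg x) (abs_nonneg x)

/-- integrable dominating function for `ψ (s - β t)`, `t ∈ [0,1]`. -/
noncomputable def Gdom (β : ℝ) (ψ : ℝ → ℝ) (s : ℝ) : ℝ :=
  ψ s + ψ (s - β) + Set.indicator (Set.Icc 0 β) (fun _ => ψ 0) s

lemma psi_sub_le (hβ : 0 < β) (hψpos : ∀ s, 0 < ψ s) (hψsymm : ∀ s, ψ (-s) = ψ s)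
    (hψanti : AntitoneOn ψ (Set.Ici 0)) (s : ℝ) (t : ℝ) (ht : t ∈ Set.Icc (0:ℝ) 1) :
    ψ (s - β * t) ≤ Gdom β ψ s := by
  obtain ⟨ht0, ht1⟩ := ht
  have hβt0 : 0 ≤ β * t := mul_nonneg hβ.le ht0
  have hβtβ : β * t ≤ β := by nlinarith
  have hind0 : 0 ≤ Set.indicator (Set.Icc 0 β) (fun _ => ψ 0) s :=
    Set.indicator_nonneg (fun _ _ => (hψpos 0).le) s
  unfold Gdom
  rcases le_or_gt s 0 with hs | hs
  · have h1 : ψ (s - β * t) = ψ (β * t - s) := by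
      rw [← hψsymm (β * t - s)]; ring_nf
    have h2 : ψ (β * t - s) ≤ ψ (-s) :=
      hψanti (by simp [Set.mem_Ici]; linarith) (by simp [Set.mem_Ici]; linarith) (by linarith)
    have h3 : ψ (-s) = ψ s := hψsymm s
    have := hψpos (s - β)
    linarith
  rcases le_or_gt s β with hsβ | hsβ
  · have hind : Set.indicator (Set.Icc 0 β) (fun _ => ψ 0) s = ψ 0 :=
      Set.indicator_of_mem (Set.mem_Icc.mpr ⟨hs.le, hsβ⟩) _
    have h1 := psi_le_psi_zero hψsymm hψanti (s - β * t)
    have := hψpos s; have := hψpos (s - β)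
    linarith
  · have h2 : ψ (s - β * t) ≤ ψ (s - β) :=
      hψanti (by simp [Set.mem_Ici]; linarith) (by simp [Set.mem_Ici]; linarith) (by linarith)
    have := hψpos s
    linarith

lemma Gdom_integrable (hψcont : Continuous ψ) (hψint : Integrable ψ) :
    Integrable (Gdom β ψ) := by
  have h1 : Integrable (fun s => ψ (s - β)) := hψint.comp_sub_right β
  have h2 : Integrable (Set.indicator (Set.Icc 0 β) (fun _ : ℝ => ψ 0)) := by
    rw [integrable_indicator_iff measurableSet_Icc]
    exact integrableOn_const measure_Icc_lt_top.ne
  exact (hψint.add h1).add h2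

lemma range_bdd (hψpos : ∀ s, 0 < ψ s) (hψsymm : ∀ s, ψ (-s) = ψ s)
    (hψanti : AntitoneOn ψ (Set.Ici 0))
    (f : Set.Icc (0:ℝ) 1 → ℝ) (B : ℝ) (hB : ∀ t, |f t| ≤ B) (s : ℝ) :
    BddAbove (Set.range fun t : Set.Icc (0:ℝ) 1 => |f t| * ψ (s - β * (t : ℝ))) := by
  refine ⟨B * ψ 0, ?_⟩
  rintro _ ⟨t, rfl⟩
  exact mul_le_mul (hB t) (psi_le_psi_zero hψsymm hψanti _) (hψpos _).le
    (le_trans (abs_nonneg _) (hB t))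

end Aux

/-- `f ↦ ∫ sup_{t∈[0,1]}(|f(t)|ψ(s-βt)) ds` is a norm on the space of
bounded functions on `[0,1]` with at most finitely many discontinuities. -/
theorem stmt7
    (β : ℝ) (hβ : 0 < β)
    (ψ : ℝ → ℝ) (hψcont : Continuous ψ) (hψpos : ∀ s, 0 < ψ s)
    (hψsymm : ∀ s, ψ (-s) = ψ s) (hψanti : AntitoneOn ψ (Set.Ici 0))
    (hψint : Integrable ψ) (hψprob : ∫ s, ψ s = 1) :
    (∀ f : Set.Icc (0:ℝ) 1 → ℝ, MemE f →
      Integrable (fun s => ⨆ t : Set.Icc (0:ℝ) 1, |f t| * ψ (s - β * (t : ℝ))))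
    ∧ (∀ f : Set.Icc (0:ℝ) 1 → ℝ, MemE f → (Dnorm β ψ f = 0 ↔ f = 0))
    ∧ (∀ f : Set.Icc (0:ℝ) 1 → ℝ, MemE f → ∀ lam : ℝ,
        Dnorm β ψ (lam • f) = |lam| * Dnorm β ψ f)
    ∧ (∀ f g : Set.Icc (0:ℝ) 1 → ℝ, MemE f → MemE g →
        Dnorm β ψ (f + g) ≤ Dnorm β ψ f + Dnorm β ψ g) := by
  haveI : Nonempty (Set.Icc (0:ℝ) 1) := ⟨⟨0, by norm_num⟩⟩
  set t0 : Set.Icc (0:ℝ) 1 := ⟨0, by norm_num⟩ with ht0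
  -- the sup functional
  set F : (Set.Icc (0:ℝ) 1 → ℝ) → ℝ → ℝ :=
    fun f s => ⨆ t : Set.Icc (0:ℝ) 1, |f t| * ψ (s - β * (t : ℝ)) with hF
  have hbdd : ∀ (f : Set.Icc (0:ℝ) 1 → ℝ) (B : ℝ), (∀ t, |f t| ≤ B) → ∀ s : ℝ,
      BddAbove (Set.range fun t : Set.Icc (0:ℝ) 1 => |f t| * ψ (s - β * (t : ℝ))) :=
    fun f B hB s => range_bdd hψpos hψsymm hψanti f B hB s
  have hFnonneg : ∀ (f : Set.Icc (0:ℝ) 1 → ℝ) (B : ℝ), (∀ t, |f t| ≤ B) → ∀ s, 0 ≤ F f s := by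
    intro f B hB s
    exact le_trans (mul_nonneg (abs_nonneg (f t0)) (hψpos _).le)
      (le_ciSup (hbdd f B hB s) t0)
  have hFint : ∀ (f : Set.Icc (0:ℝ) 1 → ℝ) (B : ℝ), (∀ t, |f t| ≤ B) →
      Integrable (F f) := by
    intro f B hB
    have hB0 : 0 ≤ B := le_trans (abs_nonneg (f t0)) (hB t0)
    have hmeas : Measurable (F f) := by
      have hlsc : LowerSemicontinuous (F f) := by
        apply lowerSemicontinuous_ciSup (fun s => hbdd f B hB s)
        intro t
        exact (continuous_const.mul (hψcont.comp
          (continuous_id.sub continuous_const))).lowerSemicontinuous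
      exact hlsc.measurable
    apply Integrable.mono' ((Gdom_integrable hψcont hψint).const_mul B)
      hmeas.aestronglyMeasurable
    filter_upwards with s
    rw [Real.norm_eq_abs, abs_of_nonneg (hFnonneg f B hB s)]
    apply ciSup_le
    intro t
    exact mul_le_mul (hB t) (psi_sub_le hβ hψpos hψsymm hψanti s t t.2) (hψpos _).le hB0
  refine ⟨?_, ?_, ?_, ?_⟩
  · rintro f ⟨⟨B, hB⟩, -⟩
    exact hFint f B hB
  · rintro f ⟨⟨B, hB⟩, -⟩
    constructor
    · intro h
      have hae : F f =ᵐ[volume] 0 :=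
        (integral_eq_zero_iff_of_nonneg (hFnonneg f B hB) (hFint f B hB)).mp h
      by_contra hf
      obtain ⟨t1, ht1⟩ : ∃ t1, f t1 ≠ 0 := by
        by_contra hc
        push_neg at hc
        exact hf (funext hc)
      have hpos : ∀ s, 0 < F f s := by
        intro s
        exact lt_of_lt_of_le (mul_pos (abs_pos.2 ht1) (hψpos _))
          (le_ciSup (hbdd f B hB s) t1)
      rw [Filter.EventuallyEq, ae_iff] at hae
      have huniv : {s : ℝ | ¬ F f s = (0 : ℝ → ℝ) s} = Set.univ :=
        Set.eq_univ_of_forall fun s => by simpa using (hpos s).ne'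
      rw [huniv, Real.volume_univ] at hae
      exact ENNReal.top_ne_zero hae
    · rintro rfl
      have : ∀ s : ℝ, F 0 s = 0 := by
        intro s
        simp only [hF, Pi.zero_apply, abs_zero, zero_mul, ciSup_const]
      simp only [Dnorm]
      rw [show (fun s => ⨆ t : Set.Icc (0:ℝ) 1,
        |(0 : Set.Icc (0:ℝ) 1 → ℝ) t| * ψ (s - β * (t : ℝ))) = fun s => (0:ℝ) from funext this]
      exact integral_zero _ _
  · rintro f ⟨⟨B, hB⟩, -⟩ lam
    have hptw : ∀ s, F (lam • f) s = |lam| * F f s := by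
      intro s
      rw [hF]
      simp only
      rw [Real.mul_iSup_of_nonneg (abs_nonneg lam)]
      apply iSup_congr
      intro t
      simp only [Pi.smul_apply, smul_eq_mul, abs_mul]
      ring
    show (∫ s, F (lam • f) s) = |lam| * ∫ s, F f s
    rw [funext hptw, integral_const_mul]
  · rintro f g ⟨⟨B, hB⟩, -⟩ ⟨⟨C, hC⟩, -⟩
    have hBC : ∀ t, |(f + g) t| ≤ B + C := fun t =>
      le_trans (abs_add_le _ _) (add_le_add (hB t) (hC t))
    have hptw : ∀ s, F (f + g) s ≤ F f s + F g s := by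
      intro s
      apply ciSup_le
      intro t
      calc |(f + g) t| * ψ (s - β * (t : ℝ))
          ≤ (|f t| + |g t|) * ψ (s - β * (t : ℝ)) :=
            mul_le_mul_of_nonneg_right (abs_add_le _ _) (hψpos _).le
        _ = |f t| * ψ (s - β * (t : ℝ)) + |g t| * ψ (s - β * (t : ℝ)) := add_mul _ _ _
        _ ≤ F f s + F g s :=
            add_le_add (le_ciSup (hbdd f B hB s) t) (le_ciSup (hbdd g C hC s) t)
    show (∫ s, F (f + g) s) ≤ Dnorm β ψ f + Dnorm β ψ g
    calc (∫ s, F (f + g) s) ≤ ∫ s, (F f s + F g s) :=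
          integral_mono (hFint (f + g) (B + C) hBC) ((hFint f B hB).add (hFint g C hC)) hptw
      _ = Dnorm β ψ f + Dnorm β ψ g := integral_add (hFint f B hB) (hFint g C hC)
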